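/- For a sequence (αₙ)_{n ∈ ℤ\{0}} ∈ ℓ² and τ > 2, the Ingham inequalities hold: (2τ/π)(1 − 4/τ²) Σ|αₙ|² ≤ ∫₀^τ |Σₙ αₙ e^{inπt}|² dt ≤ (8τ/π)(1 + 4/τ²) Σ|αₙ|². -/

import Mathlib

set_option maxHeartbeats 1000000

open MeasureTheory Filter

namespace Stmt18Aux

open intervalIntegral Complex
open scoped ENNReal

lemma orth (k : ℤ) : (∫ t in (0:ℝ)..2, Complex.exp (Complex.I * k * Real.pi * t))
    = if k = 0 then 2 else 0 := by
  rcases eq_or_ne k 0 with rfl | hk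
  · simp
  · have hc : Complex.I * k * Real.pi ≠ 0 := by
      simp [Complex.I_ne_zero, hk, Real.pi_ne_zero, Complex.ofReal_ne_zero]
    rw [if_neg hk, integral_exp_mul_complex hc]
    have h2 : Complex.I * k * Real.pi * ((2:ℝ):ℂ) = k * (2 * Real.pi * Complex.I) := by
      push_cast; ring
    rw [h2, Complex.exp_int_mul_two_pi_mul_I]
    simp

lemma expcont (n : ℤ) : Continuous fun t : ℝ => Complex.exp (Complex.I * n * Real.pi * t) := by
  fun_prop

lemma parseval (β : ℤ → ℂ) (s : Finset ℤ) :
    (∫ t in (0:ℝ)..2, ‖∑ n ∈ s, β n * Complex.exp (Complex.I * n * Real.pi * t)‖ ^ 2)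
      = 2 * ∑ n ∈ s, ‖β n‖ ^ 2 := by
  set S : ℝ → ℂ := fun t => ∑ n ∈ s, β n * Complex.exp (Complex.I * n * Real.pi * t) with hS
  have hScont : Continuous S := by
    apply continuous_finset_sum; intro n _; exact continuous_const.mul (expcont n)
  have hIcont : Continuous fun t => S t * (starRingEnd ℂ) (S t) :=
    hScont.mul (Complex.continuous_conj.comp hScont)
  have hexp : ∀ (n m : ℤ) (t : ℝ),
      Complex.exp (Complex.I * n * Real.pi * t) * (starRingEnd ℂ) (Complex.exp (Complex.I * m * Real.pi * t))
        = Complex.exp (Complex.I * ((n - m : ℤ) : ℂ) * Real.pi * t) := by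
    intro n m t
    rw [← Complex.exp_conj, ← Complex.exp_add]
    congr 1
    simp only [map_mul, Complex.conj_I, Complex.conj_ofReal, map_intCast]
    push_cast
    ring
  have hJ : (∫ t in (0:ℝ)..2, S t * (starRingEnd ℂ) (S t))
      = 2 * ∑ n ∈ s, (β n * (starRingEnd ℂ) (β n)) := by
    have hint : ∀ t : ℝ, S t * (starRingEnd ℂ) (S t)
        = ∑ n ∈ s, ∑ m ∈ s, (β n * (starRingEnd ℂ) (β m)) * Complex.exp (Complex.I * ((n - m : ℤ) : ℂ) * Real.pi * t) := by
      intro t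
      rw [hS]
      simp only [map_sum, Finset.sum_mul_sum, map_mul]
      refine Finset.sum_congr rfl fun n _ => Finset.sum_congr rfl fun m _ => ?_
      rw [← hexp n m t]; ring
    simp only [hint]
    rw [intervalIntegral.integral_finset_sum]
    · have inner : ∀ n ∈ s, (∫ t in (0:ℝ)..2, ∑ m ∈ s, (β n * (starRingEnd ℂ) (β m)) * Complex.exp (Complex.I * ((n - m : ℤ) : ℂ) * Real.pi * t))
          = β n * (starRingEnd ℂ) (β n) * 2 := by
        intro n hn
        rw [intervalIntegral.integral_finset_sum]
        · have : ∀ m ∈ s, (∫ t in (0:ℝ)..2, (β n * (starRingEnd ℂ) (β m)) * Complex.exp (Complex.I * ((n - m : ℤ) : ℂ) * Real.pi * t))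
              = if m = n then β n * (starRingEnd ℂ) (β n) * 2 else 0 := by
            intro m _
            rw [intervalIntegral.integral_const_mul, orth]
            rcases eq_or_ne m n with rfl | hmn
            · simp
            · rw [if_neg (sub_ne_zero.mpr (fun h => hmn h.symm)), if_neg hmn, mul_zero]
          rw [Finset.sum_congr rfl this, Finset.sum_ite_eq' s n, if_pos hn]
        · intro m _
          exact (continuous_const.mul (expcont (n - m))).intervalIntegrable _ _
      rw [Finset.sum_congr rfl inner, ← Finset.sum_mul, mul_comm]
    · intro n _
      apply Continuous.intervalIntegrable
      apply continuous_finset_sum; intro m _; exact continuous_const.mul (expcont (n - m))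
  have hre : (∫ t in (0:ℝ)..2, ‖S t‖ ^ 2) = (∫ t in (0:ℝ)..2, S t * (starRingEnd ℂ) (S t)).re := by
    rw [intervalIntegral.integral_of_le (by norm_num : (0:ℝ) ≤ 2),
        intervalIntegral.integral_of_le (by norm_num : (0:ℝ) ≤ 2)]
    have h := integral_re (μ := volume.restrict (Set.Ioc (0:ℝ) 2))
      (f := fun t => S t * (starRingEnd ℂ) (S t)) hIcont.integrableOn_Ioc
    rw [← RCLike.re_to_complex, ← h]
    refine setIntegral_congr_fun measurableSet_Ioc fun t _ => ?_
    simp only [RCLike.re_to_complex]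
    rw [Complex.mul_conj]
    simp [Complex.normSq_eq_norm_sq, ← Complex.ofReal_pow]
  rw [hre, hJ]
  simp only [Complex.mul_conj]
  rw [show (2 : ℂ) * ∑ n ∈ s, ((Complex.normSq (β n) : ℝ) : ℂ)
      = ((2 * ∑ n ∈ s, Complex.normSq (β n) : ℝ) : ℂ) by push_cast; ring,
    Complex.ofReal_re]
  congr 1
  refine Finset.sum_congr rfl fun n _ => ?_
  simp [Complex.normSq_eq_norm_sq]

lemma bounds (β : ℤ → ℂ) (s : Finset ℤ) (τ : ℝ) (hτ : 2 < τ) :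
    ((⌊τ/2⌋ : ℝ) * (2 * ∑ n ∈ s, ‖β n‖ ^ 2)
        ≤ ∫ t in (0:ℝ)..τ, ‖∑ n ∈ s, β n * Complex.exp (Complex.I * n * Real.pi * t)‖ ^ 2)
    ∧ ((∫ t in (0:ℝ)..τ, ‖∑ n ∈ s, β n * Complex.exp (Complex.I * n * Real.pi * t)‖ ^ 2)
        ≤ ((⌊τ/2⌋ : ℝ) + 1) * (2 * ∑ n ∈ s, ‖β n‖ ^ 2)) := by
  set S : ℝ → ℂ := fun t => ∑ n ∈ s, β n * Complex.exp (Complex.I * n * Real.pi * t) with hS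
  set g : ℝ → ℝ := fun t => ‖S t‖ ^ 2 with hg
  have hScont : Continuous S := by
    apply continuous_finset_sum; intro n _; exact continuous_const.mul (expcont n)
  have hgcont : Continuous g := (hScont.norm).pow 2
  have hint : ∀ a b : ℝ, IntervalIntegrable g volume a b := fun a b =>
    hgcont.intervalIntegrable a b
  have hper : Function.Periodic g 2 := by
    intro t
    have : S (t + 2) = S t := by
      refine Finset.sum_congr rfl fun n _ => ?_
      congr 1
      rw [show Complex.I * n * Real.pi * ((t + 2 : ℝ) : ℂ)
          = Complex.I * n * Real.pi * (t : ℂ) + n * (2 * Real.pi * Complex.I) by push_cast; ring,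
        Complex.exp_add, Complex.exp_int_mul_two_pi_mul_I, mul_one]
    simp [hg, this]
  set m : ℤ := ⌊τ/2⌋ with hm
  have hm1 : (1:ℤ) ≤ m := by
    rw [hm, Int.le_floor]; push_cast; linarith
  have hmle : (m:ℝ) ≤ τ/2 := Int.floor_le _
  have hmgt : τ/2 - 1 < (m:ℝ) := Int.sub_one_lt_floor _
  have hper2 : (∫ t in (0:ℝ)..2, g t) = 2 * ∑ n ∈ s, ‖β n‖ ^ 2 := parseval β s
  have hzs : (∫ t in (0:ℝ)..(m • (2:ℝ)), g t) = m • (∫ t in (0:ℝ)..2, g t) := by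
    have := hper.intervalIntegral_add_zsmul_eq m 0 hint
    simpa using this
  have hsplit : (∫ t in (0:ℝ)..τ, g t)
      = (∫ t in (0:ℝ)..(m • (2:ℝ)), g t) + ∫ t in (m • (2:ℝ))..τ, g t :=
    (integral_add_adjacent_intervals (hint _ _) (hint _ _)).symm
  have h2m : (m • (2:ℝ)) ≤ τ := by rw [zsmul_eq_mul]; linarith
  have h2m' : τ ≤ m • (2:ℝ) + 2 := by rw [zsmul_eq_mul]; linarith
  have hnonneg : ∀ t : ℝ, 0 ≤ g t := fun t => by positivity
  have htail0 : 0 ≤ ∫ t in (m • (2:ℝ))..τ, g t :=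
    intervalIntegral.integral_nonneg h2m (fun t _ => hnonneg t)
  have htail2 : (∫ t in (m • (2:ℝ))..τ, g t) ≤ 2 * ∑ n ∈ s, ‖β n‖ ^ 2 := by
    have hfull : (∫ t in (m • (2:ℝ))..(m • (2:ℝ) + 2), g t) = 2 * ∑ n ∈ s, ‖β n‖ ^ 2 := by
      rw [hper.intervalIntegral_add_eq (m • (2:ℝ)) 0, zero_add, hper2]
    have := integral_add_adjacent_intervals (hint (m • (2:ℝ)) τ) (hint τ (m • (2:ℝ) + 2))
    have h2 : 0 ≤ ∫ t in τ..(m • (2:ℝ) + 2), g t :=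
      intervalIntegral.integral_nonneg h2m' (fun t _ => hnonneg t)
    linarith [this.symm ▸ hfull]
  have hQ : 0 ≤ 2 * ∑ n ∈ s, ‖β n‖ ^ 2 := by positivity
  constructor
  · rw [hsplit, hzs, hper2, zsmul_eq_mul]
    linarith
  · rw [hsplit, hzs, hper2, zsmul_eq_mul]
    linarith

lemma numA (τ : ℝ) (hτ : 2 < τ) :
    (2 * τ / Real.pi) * (1 - 4 / τ ^ 2) ≤ 2 * (⌊τ/2⌋ : ℝ) := by
  have hπ1 : 3.14 < Real.pi := by linarith [Real.pi_gt_d6]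
  have hπ2 : Real.pi < 3.15 := by linarith [Real.pi_lt_d2]
  have hπ0 : 0 < Real.pi := by linarith
  have hτ0 : 0 < τ := by linarith
  set m : ℝ := (⌊τ/2⌋ : ℝ) with hm
  have hmle : m ≤ τ/2 := Int.floor_le _
  have hmgt : τ/2 - 1 < m := Int.sub_one_lt_floor _
  have key : τ^2 - 4 ≤ m * Real.pi * τ := by
    rcases le_or_gt τ 4 with h4 | h4
    · have hm1 : (1:ℝ) ≤ m := by
        have h : (1:ℤ) ≤ ⌊τ/2⌋ := by rw [Int.le_floor]; push_cast; linarith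
        rw [hm]; exact_mod_cast h
      nlinarith [mul_nonneg (mul_nonneg (sub_nonneg.2 hm1) hπ0.le) hτ0.le,
        mul_nonneg (sub_nonneg.2 h4) (by linarith : (0:ℝ) ≤ τ + 1),
        mul_pos (by linarith : (0:ℝ) < Real.pi - 3.14) hτ0]
    · rcases le_or_gt τ 6 with h6 | h6
      · have hm2 : (2:ℝ) ≤ m := by
          have h : (2:ℤ) ≤ ⌊τ/2⌋ := by rw [Int.le_floor]; push_cast; linarith
          rw [hm]; exact_mod_cast h
        nlinarith [mul_nonneg (mul_nonneg (sub_nonneg.2 hm2) hπ0.le) hτ0.le,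
          mul_nonneg (sub_nonneg.2 h6) (by linarith : (0:ℝ) ≤ τ + 1),
          mul_pos (by linarith : (0:ℝ) < Real.pi - 3.14) hτ0]
      · nlinarith [mul_pos (mul_pos (by linarith : (0:ℝ) < m - (τ/2 - 1)) hπ0) hτ0,
          mul_nonneg (by linarith : (0:ℝ) ≤ Real.pi - 3.14)
            (by nlinarith : (0:ℝ) ≤ τ^2/2 - τ),
          mul_nonneg (by linarith : (0:ℝ) ≤ τ - 6) hτ0.le]
  rw [div_mul_eq_mul_div, div_le_iff₀ hπ0]
  have h1 : 4 / τ^2 * τ^2 = 4 := by field_simp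
  nlinarith [key, hτ0, mul_pos hτ0 hτ0]

lemma numB (τ : ℝ) (hτ : 2 < τ) :
    2 * ((⌊τ/2⌋ : ℝ) + 1) ≤ (8 * τ / Real.pi) * (1 + 4 / τ ^ 2) := by
  have hπ2 : Real.pi < 3.15 := by linarith [Real.pi_lt_d2]
  have hπ0 : 0 < Real.pi := Real.pi_pos
  have hτ0 : 0 < τ := by linarith
  have hmle : (⌊τ/2⌋ : ℝ) ≤ τ/2 := Int.floor_le _
  rw [div_mul_eq_mul_div, le_div_iff₀ hπ0]
  have h0 : 0 ≤ 4 / τ^2 := by positivity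
  nlinarith

lemma sqrtEq {μ : Measure ℝ} (g : ℝ → ℂ) (hg : MemLp g 2 μ) :
    eLpNorm g 2 μ = ENNReal.ofReal (Real.sqrt (∫ a, ‖g a‖^2 ∂μ)) := by
  rw [hg.eLpNorm_eq_integral_rpow_norm two_ne_zero ENNReal.ofNat_ne_top]
  congr 1
  have h2 : ((2:ℝ≥0∞)).toReal = (2:ℝ) := by norm_num
  rw [h2, Real.sqrt_eq_rpow, one_div]
  congr 1
  refine integral_congr_ae (Filter.Eventually.of_forall fun a => ?_)
  norm_cast

lemma tendsto_Icc : Tendsto (fun N : ℕ => Finset.Icc (-(N:ℤ)) (N:ℤ)) atTop atTop := by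
  apply tendsto_atTop_finset_of_monotone
  · intro N M h
    apply Finset.Icc_subset_Icc <;> omega
  · intro x
    exact ⟨x.natAbs, by simp only [Finset.mem_Icc]; omega⟩

lemma l2limit (τ : ℝ) (hτ : 2 < τ) (f : ℝ → ℂ) (g : ℕ → ℝ → ℂ)
    (hmem : MemLp f 2 (volume.restrict (Set.Ioc 0 τ)))
    (hmemg : ∀ N, MemLp (g N) 2 (volume.restrict (Set.Ioc 0 τ)))
    (hf : Tendsto (fun N : ℕ => ∫ t in (0:ℝ)..τ, ‖f t - g N t‖ ^ 2) atTop (nhds 0)) :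
    Tendsto (fun N : ℕ => ∫ t in (0:ℝ)..τ, ‖g N t‖ ^ 2) atTop
      (nhds (∫ t in (0:ℝ)..τ, ‖f t‖ ^ 2)) := by
  set μ := volume.restrict (Set.Ioc (0:ℝ) τ) with hμ
  have hτ0 : (0:ℝ) ≤ τ := by linarith
  have hconv : ∀ (h : ℝ → ℂ), (∫ t in (0:ℝ)..τ, ‖h t‖ ^ 2) = ∫ a, ‖h a‖^2 ∂μ := fun h => by
    rw [intervalIntegral.integral_of_le hτ0]
  set A : ℝ := Real.sqrt (∫ a, ‖f a‖^2 ∂μ) with hA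
  set B : ℕ → ℝ := fun N => Real.sqrt (∫ a, ‖g N a‖^2 ∂μ) with hB
  set E : ℕ → ℝ := fun N => Real.sqrt (∫ a, ‖f a - g N a‖^2 ∂μ) with hE
  have hmemd : ∀ N, MemLp (fun t => f t - g N t) 2 μ := fun N => hmem.sub (hmemg N)
  have hA0 : 0 ≤ A := Real.sqrt_nonneg _
  have hB0 : ∀ N, 0 ≤ B N := fun N => Real.sqrt_nonneg _
  have hE0 : ∀ N, 0 ≤ E N := fun N => Real.sqrt_nonneg _
  have tri1 : ∀ N, A ≤ B N + E N := by
    intro N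
    have h := eLpNorm_add_le (hmemg N).1 (hmemd N).1 one_le_two
      (f := g N) (g := fun t => f t - g N t)
    have heq : (g N + fun t => f t - g N t) = f := funext fun t => by simp
    rw [heq, sqrtEq f hmem, sqrtEq (g N) (hmemg N), sqrtEq _ (hmemd N),
      ← ENNReal.ofReal_add (hB0 N) (hE0 N)] at h
    exact (ENNReal.ofReal_le_ofReal_iff (by positivity)).1 h
  have tri2 : ∀ N, B N ≤ A + E N := by
    intro N
    have h := eLpNorm_add_le hmem.1 (hmemd N).neg.1 one_le_two
      (f := f) (g := fun t => -(f t - g N t))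
    have heq : (f + fun t => -(f t - g N t)) = g N := funext fun t => by simp
    have hneg : eLpNorm (fun t => -(f t - g N t)) 2 μ
        = eLpNorm (fun t => f t - g N t) 2 μ := eLpNorm_neg _ _ _
    rw [heq, hneg, sqrtEq f hmem, sqrtEq (g N) (hmemg N), sqrtEq _ (hmemd N),
      ← ENNReal.ofReal_add hA0 (hE0 N)] at h
    exact (ENNReal.ofReal_le_ofReal_iff (by positivity)).1 h
  have hElim : Tendsto E atTop (nhds 0) := by
    have : Tendsto (fun N : ℕ => ∫ a, ‖f a - g N a‖^2 ∂μ) atTop (nhds 0) := by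
      simpa only [hconv] using hf
    have h := (Real.continuous_sqrt.tendsto 0).comp this
    rw [Real.sqrt_zero] at h
    exact h
  have hBlim : Tendsto B atTop (nhds A) := by
    rw [tendsto_iff_dist_tendsto_zero]
    apply squeeze_zero (fun N => dist_nonneg) (fun N => ?_) hElim
    rw [Real.dist_eq, abs_sub_le_iff]
    constructor <;> [linarith [tri2 N]; linarith [tri1 N]]
  have key : Tendsto (fun N => (B N)^2) atTop (nhds (A^2)) := hBlim.pow 2
  have hBsq : ∀ N, (B N)^2 = ∫ a, ‖g N a‖^2 ∂μ := fun N =>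
    Real.sq_sqrt (integral_nonneg fun a => by positivity)
  have hAsq : A^2 = ∫ a, ‖f a‖^2 ∂μ :=
    Real.sq_sqrt (integral_nonneg fun a => by positivity)
  simp only [hconv]
  rw [← hAsq]
  simpa [hBsq] using key

end Stmt18Aux

/-- Ingham's inequalities with explicit constants: for an `ℓ²` family `(α_n)_{n ∈ ℤ∖{0}}`
and `τ > 2`, the `L²(0,τ)`-sum `f` of the series `∑ α_n e^{inπt}` satisfies
`(2τ/π)(1 - 4/τ²) ∑|α_n|² ≤ ∫₀^τ |f|² ≤ (8τ/π)(1 + 4/τ²) ∑|α_n|²`. -/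
theorem stmt18 (α : ℤ → ℂ) (hα0 : α 0 = 0)
    (hsum : Summable fun n : ℤ => ‖α n‖ ^ 2)
    (τ : ℝ) (hτ : 2 < τ)
    (f : ℝ → ℂ)
    (hmem : MeasureTheory.MemLp f 2 (MeasureTheory.volume.restrict (Set.Ioc 0 τ)))
    (hf : Tendsto (fun N : ℕ => ∫ t in (0:ℝ)..τ,
        ‖f t - ∑ n ∈ Finset.Icc (-(N:ℤ)) (N:ℤ),
            α n * Complex.exp (Complex.I * n * Real.pi * t)‖ ^ 2)
      atTop (nhds 0)) :
    (2 * τ / Real.pi) * (1 - 4 / τ ^ 2) * (∑' n : ℤ, ‖α n‖ ^ 2)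
        ≤ ∫ t in (0:ℝ)..τ, ‖f t‖ ^ 2 ∧
    (∫ t in (0:ℝ)..τ, ‖f t‖ ^ 2)
        ≤ (8 * τ / Real.pi) * (1 + 4 / τ ^ 2) * (∑' n : ℤ, ‖α n‖ ^ 2) := by
  classical
  set g : ℕ → ℝ → ℂ := fun N t => ∑ n ∈ Finset.Icc (-(N:ℤ)) (N:ℤ),
      α n * Complex.exp (Complex.I * n * Real.pi * t) with hgdef
  have hτ0 : (0:ℝ) ≤ τ := by linarith
  haveI : IsFiniteMeasure (MeasureTheory.volume.restrict (Set.Ioc (0:ℝ) τ)) := by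
    constructor
    rw [Measure.restrict_apply_univ, Real.volume_Ioc]
    exact ENNReal.ofReal_lt_top
  have hgc : ∀ N, Continuous (g N) := by
    intro N
    apply continuous_finset_sum; intro n _
    exact continuous_const.mul (Stmt18Aux.expcont n)
  have hexp1 : ∀ (n : ℤ) (t : ℝ), ‖Complex.exp (Complex.I * n * Real.pi * t)‖ = 1 := by
    intro n t
    rw [show Complex.I * n * Real.pi * (t:ℂ) = ((n * Real.pi * t : ℝ) : ℂ) * Complex.I by
      push_cast; ring]
    rw [Complex.norm_exp_ofReal_mul_I]
  have hmemg : ∀ N, MemLp (g N) 2 (MeasureTheory.volume.restrict (Set.Ioc (0:ℝ) τ)) := by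
    intro N
    apply MemLp.of_bound (hgc N).aestronglyMeasurable
      (∑ n ∈ Finset.Icc (-(N:ℤ)) (N:ℤ), ‖α n‖)
    apply Filter.Eventually.of_forall
    intro t
    calc ‖g N t‖ ≤ ∑ n ∈ Finset.Icc (-(N:ℤ)) (N:ℤ), ‖α n * Complex.exp (Complex.I * n * Real.pi * t)‖ :=
          norm_sum_le _ _
      _ = ∑ n ∈ Finset.Icc (-(N:ℤ)) (N:ℤ), ‖α n‖ := by
          refine Finset.sum_congr rfl fun n _ => ?_
          rw [norm_mul, hexp1, mul_one]
  have hlim : Tendsto (fun N : ℕ => ∫ t in (0:ℝ)..τ, ‖g N t‖ ^ 2) atTop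
      (nhds (∫ t in (0:ℝ)..τ, ‖f t‖ ^ 2)) :=
    Stmt18Aux.l2limit τ hτ f g hmem hmemg hf
  have hQlim : Tendsto (fun N : ℕ => ∑ n ∈ Finset.Icc (-(N:ℤ)) (N:ℤ), ‖α n‖ ^ 2) atTop
      (nhds (∑' n : ℤ, ‖α n‖ ^ 2)) :=
    hsum.hasSum.comp Stmt18Aux.tendsto_Icc
  set m : ℝ := (⌊τ/2⌋ : ℝ) with hm
  have hlow : ∀ N : ℕ, m * (2 * ∑ n ∈ Finset.Icc (-(N:ℤ)) (N:ℤ), ‖α n‖ ^ 2)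
      ≤ ∫ t in (0:ℝ)..τ, ‖g N t‖ ^ 2 := fun N =>
    (Stmt18Aux.bounds α (Finset.Icc (-(N:ℤ)) (N:ℤ)) τ hτ).1
  have hhigh : ∀ N : ℕ, (∫ t in (0:ℝ)..τ, ‖g N t‖ ^ 2)
      ≤ (m + 1) * (2 * ∑ n ∈ Finset.Icc (-(N:ℤ)) (N:ℤ), ‖α n‖ ^ 2) := fun N =>
    (Stmt18Aux.bounds α (Finset.Icc (-(N:ℤ)) (N:ℤ)) τ hτ).2
  set Q : ℝ := ∑' n : ℤ, ‖α n‖ ^ 2 with hQdef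
  have hQ0 : 0 ≤ Q := tsum_nonneg fun n => by positivity
  have hlimlow : m * (2 * Q) ≤ ∫ t in (0:ℝ)..τ, ‖f t‖ ^ 2 :=
    le_of_tendsto_of_tendsto'
      ((tendsto_const_nhds.mul (tendsto_const_nhds.mul hQlim))) hlim hlow
  have hlimhigh : (∫ t in (0:ℝ)..τ, ‖f t‖ ^ 2) ≤ (m + 1) * (2 * Q) :=
    le_of_tendsto_of_tendsto' hlim
      ((tendsto_const_nhds.mul (tendsto_const_nhds.mul hQlim))) hhigh
  have hA := Stmt18Aux.numA τ hτ
  have hB := Stmt18Aux.numB τ hτ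
  constructor
  · have := mul_le_mul_of_nonneg_right hA hQ0
    calc (2 * τ / Real.pi) * (1 - 4 / τ ^ 2) * Q ≤ 2 * m * Q := this
      _ = m * (2 * Q) := by ring
      _ ≤ _ := hlimlow
  · have := mul_le_mul_of_nonneg_right hB hQ0
    calc (∫ t in (0:ℝ)..τ, ‖f t‖ ^ 2) ≤ (m + 1) * (2 * Q) := hlimhigh
      _ = 2 * (m + 1) * Q := by ring
      _ ≤ (8 * τ / Real.pi) * (1 + 4 / τ ^ 2) * Q := this
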